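/- Let Γ be a full-rank lattice, ν > 0, χ a unimodular pseudo-character, and define P_m(z) = Σ_{γ∈Γ} χ(γ)(z−γ)^m e^{−(ν/2)|γ|² + ν z γ̄} and a_{m,n} = Σ_{γ∈Γ} χ(γ) e^{−(ν/2)|γ|²} H^ν_{m,n}(γ, γ̄). Then P_m(z) = ((−1)^m / ν^m) Σ_{n=0}^∞ a_{m,n} z^n / n!, with absolute convergence. -/

import Mathlib

open Complex

/-- The weighted complex Hermite polynomial `H^ν_{m,n}(ξ, ξ̄)`. -/
noncomputable def hermiteC (ν : ℝ) (m n : ℕ) (ξ : ℂ) : ℂ :=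
  (m.factorial : ℂ) * (n.factorial : ℂ) * (ν : ℂ) ^ (m + n) *
    ∑ k ∈ Finset.range (min m n + 1),
      (-1 : ℂ) ^ k * ξ ^ (m - k) * (starRingEnd ℂ ξ) ^ (n - k) /
        ((ν : ℂ) ^ k * (k.factorial : ℂ) * ((m - k).factorial : ℂ) * ((n - k).factorial : ℂ))

/-- The lattice point `m ω₁ + n ω₂` of the lattice `Γ = ℤω₁ + ℤω₂`. -/
noncomputable def latPt (ω₁ ω₂ : ℂ) (p : ℤ × ℤ) : ℂ := (p.1 : ℂ) * ω₁ + (p.2 : ℂ) * ω₂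

/-- The complex Hermite-Taylor coefficient `a_{m,n} = Σ_{γ∈Γ} χ(γ) e^{−(ν/2)|γ|²} H^ν_{m,n}(γ, γ̄)`. -/
noncomputable def aCoeff (ν : ℝ) (ω₁ ω₂ : ℂ) (χ : ℂ → ℂ) (m n : ℕ) : ℂ :=
  ∑' γ : ℤ × ℤ,
    χ (latPt ω₁ ω₂ γ) * Complex.exp (-(ν : ℂ) / 2 * (‖latPt ω₁ ω₂ γ‖ : ℂ) ^ 2) *
      hermiteC ν m n (latPt ω₁ ω₂ γ)

/-- The Poincaré series of the monomial `e_m`: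
`P_m(z) = Σ_{γ∈Γ} χ(γ) (z−γ)^m e^{−(ν/2)|γ|² + ν z γ̄}`. -/
noncomputable def poincareMonomial (ν : ℝ) (ω₁ ω₂ : ℂ) (χ : ℂ → ℂ) (m : ℕ) (z : ℂ) : ℂ :=
  ∑' γ : ℤ × ℤ,
    χ (latPt ω₁ ω₂ γ) * (z - latPt ω₁ ω₂ γ) ^ m *
      Complex.exp (-(ν : ℂ) / 2 * (‖latPt ω₁ ω₂ γ‖ : ℂ) ^ 2 +
        (ν : ℂ) * z * starRingEnd ℂ (latPt ω₁ ω₂ γ))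

lemma genSum {K : Type*} [RCLike K] (ν : K) (hν : ν ≠ 0) (s u v z : K) (m : ℕ) :
    HasSum (fun n : ℕ =>
      ((m.factorial : K) * (n.factorial : K) * ν ^ (m + n) *
        ∑ k ∈ Finset.range (min m n + 1),
          s ^ k * u ^ (m - k) * v ^ (n - k) /
            (ν ^ k * (k.factorial : K) * ((m - k).factorial : K) * ((n - k).factorial : K)))
        * z ^ n / (n.factorial : K))
      (ν ^ m * (u + s * z) ^ m * NormedSpace.exp (ν * z * v)) := by
  classical
  set E : K := NormedSpace.exp (ν * z * v) with hE
  set c : ℕ → K := fun k => (m.choose k : K) * ν ^ m * s ^ k * u ^ (m - k) * z ^ k with hc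
  set g : ℕ → ℕ → K := fun k n =>
    if k ≤ n then c k * (ν * z * v) ^ (n - k) / ((n - k).factorial : K) else 0 with hgdef
  have hg : ∀ k, HasSum (g k) (c k * E) := by
    intro k
    have h1 : HasSum (fun n : ℕ => g k (n + k)) (c k * E) := by
      have h2 := (NormedSpace.expSeries_div_hasSum_exp (ν * z * v)).mul_left (c k)
      refine h2.congr_fun fun n => ?_
      simp [hgdef, Nat.le_add_left, Nat.add_sub_cancel, mul_div_assoc]
    have h3 := (hasSum_nat_add_iff (f := g k) k).mp h1
    have h4 : ∑ i ∈ Finset.range k, g k i = 0 := by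
      apply Finset.sum_eq_zero
      intro i hi
      rw [Finset.mem_range] at hi
      simp [hgdef, Nat.not_le.mpr hi]
    rwa [h4, add_zero] at h3
  have H := hasSum_sum (f := g) (a := fun k => c k * E) (s := Finset.range (m + 1))
    (fun k _ => hg k)
  have hfun : ∀ n : ℕ,
      ((m.factorial : K) * (n.factorial : K) * ν ^ (m + n) *
        ∑ k ∈ Finset.range (min m n + 1),
          s ^ k * u ^ (m - k) * v ^ (n - k) /
            (ν ^ k * (k.factorial : K) * ((m - k).factorial : K) * ((n - k).factorial : K)))
        * z ^ n / (n.factorial : K) = ∑ k ∈ Finset.range (m + 1), g k n := by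
    intro n
    rw [Finset.mul_sum, Finset.sum_mul, Finset.sum_div]
    have hstep : ∀ k ∈ Finset.range (min m n + 1),
        (m.factorial : K) * (n.factorial : K) * ν ^ (m + n) *
          (s ^ k * u ^ (m - k) * v ^ (n - k) /
            (ν ^ k * (k.factorial : K) * ((m - k).factorial : K) * ((n - k).factorial : K)))
          * z ^ n / (n.factorial : K) = g k n := by
      intro k hk
      rw [Finset.mem_range] at hk
      have hkm : k ≤ m := le_trans (Nat.lt_succ_iff.mp hk) (min_le_left _ _)
      have hkn : k ≤ n := le_trans (Nat.lt_succ_iff.mp hk) (min_le_right _ _)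
      obtain ⟨i, rfl⟩ : ∃ i, m = k + i := ⟨m - k, (Nat.add_sub_cancel' hkm).symm⟩
      obtain ⟨j, rfl⟩ : ∃ j, n = k + j := ⟨n - k, (Nat.add_sub_cancel' hkn).symm⟩
      simp only [hgdef, hc, if_pos hkn, Nat.add_sub_cancel_left]
      have hfacn : (k + i).choose k * k.factorial * i.factorial = (k + i).factorial := by
        have := Nat.choose_mul_factorial_mul_factorial (Nat.le_add_right k i)
        simpa using this
      have hfac : (((k + i).choose k : K)) * (k.factorial : K) * (i.factorial : K)
          = ((k + i).factorial : K) := by exact_mod_cast congrArg (Nat.cast : ℕ → K) hfacn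
      have f1 : ((k + i).factorial : K) ≠ 0 := Nat.cast_ne_zero.mpr (Nat.factorial_ne_zero _)
      have f2 : ((k + j).factorial : K) ≠ 0 := Nat.cast_ne_zero.mpr (Nat.factorial_ne_zero _)
      have f3 : (k.factorial : K) ≠ 0 := Nat.cast_ne_zero.mpr (Nat.factorial_ne_zero _)
      have f4 : (i.factorial : K) ≠ 0 := Nat.cast_ne_zero.mpr (Nat.factorial_ne_zero _)
      have f5 : (j.factorial : K) ≠ 0 := Nat.cast_ne_zero.mpr (Nat.factorial_ne_zero _)
      rw [mul_div_assoc', div_mul_eq_mul_div, div_div, div_eq_div_iff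
        (mul_ne_zero (mul_ne_zero (mul_ne_zero (mul_ne_zero (pow_ne_zero _ hν) f3) f4) f5) f2) f5]
      linear_combination (-(ν ^ (k + i) * s ^ k * u ^ i * z ^ k * (ν * z * v) ^ j * ν ^ k *
        (j.factorial : K) * ((k + j).factorial : K))) * hfac
    rw [Finset.sum_congr rfl hstep]
    apply Finset.sum_subset
    · intro k hk
      rw [Finset.mem_range] at hk ⊢
      omega
    · intro k hk hnk
      rw [Finset.mem_range] at hk hnk
      simp only [hgdef]
      rw [if_neg (by omega)]
  have hval : ∑ k ∈ Finset.range (m + 1), c k * E = ν ^ m * (u + s * z) ^ m * E := by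
    rw [← Finset.sum_mul]
    congr 1
    rw [add_comm u (s * z), add_pow]
    rw [Finset.mul_sum]
    apply Finset.sum_congr rfl
    intro k hk
    simp only [hc, mul_pow]
    ring
  rw [hval] at H
  exact H.congr_fun hfun

lemma hermiteC_hasSum (ν : ℝ) (hν : ν ≠ 0) (ξ z : ℂ) (m : ℕ) :
    HasSum (fun n : ℕ => hermiteC ν m n ξ * z ^ n / (n.factorial : ℂ))
      ((ν : ℂ) ^ m * (ξ - z) ^ m * Complex.exp ((ν : ℂ) * z * starRingEnd ℂ ξ)) := by
  have h := genSum (K := ℂ) (ν : ℂ) (by exact_mod_cast hν) (-1) ξ (starRingEnd ℂ ξ) z m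
  rw [Complex.exp_eq_exp_ℂ]
  have he : ξ + (-1) * z = ξ - z := by ring
  rw [he] at h
  exact h.congr_fun fun n => by rw [hermiteC]

lemma hermiteB_hasSum (ν : ℝ) (hν : ν ≠ 0) (a t : ℝ) (m : ℕ) :
    HasSum (fun n : ℕ =>
      ((m.factorial : ℝ) * (n.factorial : ℝ) * ν ^ (m + n) *
        ∑ k ∈ Finset.range (min m n + 1),
          a ^ (m - k) * a ^ (n - k) /
            (ν ^ k * (k.factorial : ℝ) * ((m - k).factorial : ℝ) * ((n - k).factorial : ℝ)))
        * t ^ n / (n.factorial : ℝ))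
      (ν ^ m * (a + t) ^ m * Real.exp (ν * t * a)) := by
  have h := genSum (K := ℝ) ν hν 1 a a t m
  rw [Real.exp_eq_exp_ℝ]
  have he : a + 1 * t = a + t := by ring
  rw [he] at h
  exact h.congr_fun fun n => by simp

lemma hermiteC_norm_le (ν : ℝ) (hν : 0 < ν) (ξ : ℂ) (m n : ℕ) :
    ‖hermiteC ν m n ξ‖ ≤
      (m.factorial : ℝ) * (n.factorial : ℝ) * ν ^ (m + n) *
        ∑ k ∈ Finset.range (min m n + 1),
          (‖ξ‖) ^ (m - k) * (‖ξ‖) ^ (n - k) /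
            (ν ^ k * (k.factorial : ℝ) * ((m - k).factorial : ℝ) * ((n - k).factorial : ℝ)) := by
  rw [hermiteC]
  have h1 : ‖(m.factorial : ℂ) * (n.factorial : ℂ) * (ν : ℂ) ^ (m + n)‖
      = (m.factorial : ℝ) * (n.factorial : ℝ) * ν ^ (m + n) := by
    simp [norm_mul, norm_pow, Complex.norm_real, Real.norm_eq_abs, abs_of_pos hν]
  rw [norm_mul, h1]
  have h2 : ‖∑ k ∈ Finset.range (min m n + 1),
      (-1 : ℂ) ^ k * ξ ^ (m - k) * (starRingEnd ℂ ξ) ^ (n - k) /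
        ((ν : ℂ) ^ k * (k.factorial : ℂ) * ((m - k).factorial : ℂ) * ((n - k).factorial : ℂ))‖
      ≤ ∑ k ∈ Finset.range (min m n + 1),
          (‖ξ‖) ^ (m - k) * (‖ξ‖) ^ (n - k) /
            (ν ^ k * (k.factorial : ℝ) * ((m - k).factorial : ℝ) * ((n - k).factorial : ℝ)) := by
    refine (norm_sum_le _ _).trans_eq (Finset.sum_congr rfl fun k _ => ?_)
    simp [norm_div, norm_mul, norm_pow, Complex.norm_real, Real.norm_eq_abs, abs_of_pos hν,
      Complex.norm_conj]
  have h3 : 0 ≤ (m.factorial : ℝ) * (n.factorial : ℝ) * ν ^ (m + n) := by positivity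
  exact mul_le_mul_of_nonneg_left h2 h3

theorem poincareMonomial_series_expansion (ν : ℝ) (hν : 0 < ν) (ω₁ ω₂ : ℂ)
    (hrank : (ω₁ * starRingEnd ℂ ω₂).im ≠ 0) (χ : ℂ → ℂ)
    (hχuni : ∀ p : ℤ × ℤ, ‖χ (latPt ω₁ ω₂ p)‖ = 1)
    (hχpseudo : ∀ p q : ℤ × ℤ,
      χ (latPt ω₁ ω₂ p + latPt ω₁ ω₂ q) =
        χ (latPt ω₁ ω₂ p) * χ (latPt ω₁ ω₂ q) *
          Complex.exp (((ν : ℂ) / 2) *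
            (latPt ω₁ ω₂ p * starRingEnd ℂ (latPt ω₁ ω₂ q) -
              starRingEnd ℂ (latPt ω₁ ω₂ p) * latPt ω₁ ω₂ q)))
    (hPsum : ∀ (m : ℕ) (z : ℂ), Summable fun γ : ℤ × ℤ =>
      χ (latPt ω₁ ω₂ γ) * (z - latPt ω₁ ω₂ γ) ^ m *
        Complex.exp (-(ν : ℂ) / 2 * (‖latPt ω₁ ω₂ γ‖ : ℂ) ^ 2 +
          (ν : ℂ) * z * starRingEnd ℂ (latPt ω₁ ω₂ γ)))
    (hasum : ∀ m n : ℕ, Summable fun γ : ℤ × ℤ =>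
      χ (latPt ω₁ ω₂ γ) * Complex.exp (-(ν : ℂ) / 2 * (‖latPt ω₁ ω₂ γ‖ : ℂ) ^ 2) *
        hermiteC ν m n (latPt ω₁ ω₂ γ)) :
    ∀ (m : ℕ) (z : ℂ),
      Summable (fun n : ℕ => aCoeff ν ω₁ ω₂ χ m n * z ^ n / (n.factorial : ℂ)) ∧
      poincareMonomial ν ω₁ ω₂ χ m z =
        ((-1 : ℂ) ^ m / (ν : ℂ) ^ m) *
          ∑' n : ℕ, aCoeff ν ω₁ ω₂ χ m n * z ^ n / (n.factorial : ℂ) := by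
  intro m z
  have hν' : ν ≠ 0 := ne_of_gt hν
  set Λ : ℤ × ℤ → ℂ := latPt ω₁ ω₂ with hΛ
  set a : ℤ × ℤ → ℝ := fun γ => ‖Λ γ‖ with ha
  set t : ℝ := ‖z‖ with ht
  have ht0 : 0 ≤ t := norm_nonneg z
  have ha0 : ∀ γ, 0 ≤ a γ := fun γ => norm_nonneg _
  -- the double-indexed family
  set F : (ℤ × ℤ) × ℕ → ℂ := fun p =>
    χ (Λ p.1) * Complex.exp (-(ν : ℂ) / 2 * (‖Λ p.1‖ : ℂ) ^ 2) *
      (hermiteC ν m p.2 (Λ p.1) * z ^ p.2 / ((p.2).factorial : ℂ)) with hF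
  -- the real dominating family
  set B : (ℤ × ℤ) × ℕ → ℝ := fun p =>
    Real.exp (-(ν / 2) * (a p.1) ^ 2) *
      (((m.factorial : ℝ) * ((p.2).factorial : ℝ) * ν ^ (m + p.2) *
        ∑ k ∈ Finset.range (min m p.2 + 1),
          (a p.1) ^ (m - k) * (a p.1) ^ (p.2 - k) /
            (ν ^ k * (k.factorial : ℝ) * ((m - k).factorial : ℝ) * (((p.2) - k).factorial : ℝ)))
        * t ^ p.2 / ((p.2).factorial : ℝ)) with hB
  -- cast of the complex gaussian factor
  have hEeq : ∀ γ, Complex.exp (-(ν : ℂ) / 2 * (‖Λ γ‖ : ℂ) ^ 2)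
      = ((Real.exp (-(ν / 2) * (a γ) ^ 2) : ℝ) : ℂ) := by
    intro γ
    rw [Complex.ofReal_exp]
    congr 1
    push_cast
    ring
  have hBnonneg : ∀ p, 0 ≤ B p := by
    intro p
    apply mul_nonneg (Real.exp_pos _).le
    apply div_nonneg _ (by positivity)
    apply mul_nonneg _ (by positivity)
    apply mul_nonneg (by positivity)
    apply Finset.sum_nonneg
    intro k _
    have := ha0 p.1
    positivity
  have hFnorm : ∀ p, ‖F p‖ ≤ B p := by
    intro p
    simp only [hF]
    rw [norm_mul, norm_mul]
    have h1 : ‖χ (Λ p.1)‖ = 1 := by exact hχuni p.1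
    have h2 : ‖Complex.exp (-(ν : ℂ) / 2 * (‖Λ p.1‖ : ℂ) ^ 2)‖
        = Real.exp (-(ν / 2) * (a p.1) ^ 2) := by
      rw [hEeq p.1, Complex.norm_real, Real.norm_eq_abs, abs_of_pos (Real.exp_pos _)]
    rw [h1, h2, one_mul]
    simp only [hB]
    apply mul_le_mul_of_nonneg_left _ (Real.exp_pos _).le
    rw [norm_div, norm_mul, norm_pow]
    have h3 : ‖(((p.2).factorial : ℕ) : ℂ)‖ = ((p.2).factorial : ℝ) := by
      simp
    rw [h3]
    gcongr
    exact hermiteC_norm_le ν hν (Λ p.1) m p.2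
  -- row sums of the dominating family
  have hBrow : ∀ γ : ℤ × ℤ, HasSum (fun n => B (γ, n))
      (Real.exp (-(ν / 2) * (a γ) ^ 2) * (ν ^ m * (a γ + t) ^ m * Real.exp (ν * t * a γ))) := by
    intro γ
    exact (hermiteB_hasSum ν hν' (a γ) t m).mul_left _
  -- summability of the gaussian-type majorant
  have hP0 : ∀ w : ℂ, Summable (fun γ : ℤ × ℤ =>
      Real.exp (-(ν / 2) * (a γ) ^ 2 + ((ν : ℂ) * w * starRingEnd ℂ (Λ γ)).re)) := by
    intro w
    have hs : Summable fun γ : ℤ × ℤ => ‖χ (Λ γ) * (w - Λ γ) ^ 0 *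
        Complex.exp (-(ν : ℂ) / 2 * (‖Λ γ‖ : ℂ) ^ 2 +
          (ν : ℂ) * w * starRingEnd ℂ (Λ γ))‖ := summable_norm_iff.mpr (hPsum 0 w)
    refine hs.congr fun γ => ?_
    have hA : -(ν : ℂ) / 2 * (‖Λ γ‖ : ℂ) ^ 2
        = ((-(ν / 2) * (a γ) ^ 2 : ℝ) : ℂ) := by push_cast; ring
    rw [pow_zero, mul_one, norm_mul, hχuni γ,
      one_mul, Complex.norm_exp, Complex.add_re, hA, Complex.ofReal_re]
  -- x^m ≤ m! e^x
  have hpow : ∀ x : ℝ, 0 ≤ x → x ^ m ≤ (m.factorial : ℝ) * Real.exp x := by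
    intro x hx
    have h1 : x ^ m / (m.factorial : ℝ) ≤ Real.exp x := by
      refine le_trans ?_ (Real.sum_le_exp_of_nonneg hx (m + 1))
      exact Finset.single_le_sum (f := fun i => x ^ i / (i.factorial : ℝ))
        (fun i _ => by positivity) (Finset.self_mem_range_succ m)
    calc x ^ m = (m.factorial : ℝ) * (x ^ m / (m.factorial : ℝ)) := by
          field_simp
      _ ≤ (m.factorial : ℝ) * Real.exp x := by
          exact mul_le_mul_of_nonneg_left h1 (by positivity)
  -- the four directions
  set c0 : ℝ := ν * t + 1 with hc0
  have hc0pos : 0 < c0 := by positivity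
  set R : ℝ := 2 * c0 / ν with hR
  have hRpos : 0 < R := by positivity
  have hνR : ν * R = 2 * c0 := by rw [hR]; field_simp
  have hre1 : ∀ ζ : ℂ, ((ν : ℂ) * (R : ℂ) * starRingEnd ℂ ζ).re = ν * R * ζ.re := by
    intro ζ; simp [Complex.mul_re, Complex.mul_im]
  have hre2 : ∀ ζ : ℂ, ((ν : ℂ) * ((R : ℂ) * I) * starRingEnd ℂ ζ).re = ν * R * ζ.im := by
    intro ζ; simp [Complex.mul_re, Complex.mul_im]
  have hre3 : ∀ ζ : ℂ, ((ν : ℂ) * (-(R : ℂ)) * starRingEnd ℂ ζ).re = -(ν * R * ζ.re) := by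
    intro ζ; simp [Complex.mul_re, Complex.mul_im]
  have hre4 : ∀ ζ : ℂ, ((ν : ℂ) * (-((R : ℂ) * I)) * starRingEnd ℂ ζ).re
      = -(ν * R * ζ.im) := by
    intro ζ; simp [Complex.mul_re, Complex.mul_im]
  -- the summable majorant S
  set S : ℤ × ℤ → ℝ := fun γ =>
    Real.exp (-(ν / 2) * (a γ) ^ 2 + ν * R * (Λ γ).re) +
    Real.exp (-(ν / 2) * (a γ) ^ 2 + -(ν * R * (Λ γ).re)) +
    Real.exp (-(ν / 2) * (a γ) ^ 2 + ν * R * (Λ γ).im) +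
    Real.exp (-(ν / 2) * (a γ) ^ 2 + -(ν * R * (Λ γ).im)) with hS
  have hSsum : Summable S := by
    have s1 := (hP0 ((R : ℂ))).congr (fun γ => by rw [hre1])
    have s2 := (hP0 (-(R : ℂ))).congr (fun γ => by rw [hre3])
    have s3 := (hP0 ((R : ℂ) * I)).congr (fun γ => by rw [hre2])
    have s4 := (hP0 (-((R : ℂ) * I))).congr (fun γ => by rw [hre4])
    exact ((s1.add s2).add s3).add s4
  -- pointwise bound : e^{c0·a} ≤ directions
  have hdir : ∀ γ, Real.exp (-(ν / 2) * (a γ) ^ 2) * Real.exp (c0 * a γ) ≤ S γ := by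
    intro γ
    set x := (Λ γ).re
    set y := (Λ γ).im
    have habs : a γ ≤ |x| + |y| := Complex.norm_le_abs_re_add_abs_im (Λ γ)
    have hmax : c0 * a γ ≤ ν * R * max (|x|) (|y|) := by
      have h1 : c0 * a γ ≤ c0 * (|x| + |y|) := by
        exact mul_le_mul_of_nonneg_left habs hc0pos.le
      have h2 : |x| + |y| ≤ 2 * max (|x|) (|y|) := by
        have := le_max_left (|x|) (|y|)
        have := le_max_right (|x|) (|y|)
        linarith
      calc c0 * a γ ≤ c0 * (|x| + |y|) := h1
        _ ≤ c0 * (2 * max (|x|) (|y|)) := by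
            apply mul_le_mul_of_nonneg_left h2 hc0pos.le
        _ = ν * R * max (|x|) (|y|) := by rw [hνR]; ring
    have h4 : Real.exp (ν * R * max (|x|) (|y|)) ≤
        Real.exp (ν * R * x) + Real.exp (-(ν * R * x)) +
        Real.exp (ν * R * y) + Real.exp (-(ν * R * y)) := by
      have e1 := (Real.exp_pos (ν * R * x)).le
      have e2 := (Real.exp_pos (-(ν * R * x))).le
      have e3 := (Real.exp_pos (ν * R * y)).le
      have e4 := (Real.exp_pos (-(ν * R * y))).le
      have hνR0 : 0 ≤ ν * R := by positivity
      rcases le_total (|x|) (|y|) with h | h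
      · rw [max_eq_right h]
        rcases abs_cases y with ⟨hy, _⟩ | ⟨hy, _⟩
        · rw [hy]; linarith
        · have : ν * R * |y| = -(ν * R * y) := by rw [hy]; ring
          rw [this]; linarith
      · rw [max_eq_left h]
        rcases abs_cases x with ⟨hx', _⟩ | ⟨hx', _⟩
        · rw [hx']; linarith
        · have : ν * R * |x| = -(ν * R * x) := by rw [hx']; ring
          rw [this]; linarith
    calc Real.exp (-(ν / 2) * (a γ) ^ 2) * Real.exp (c0 * a γ)
        ≤ Real.exp (-(ν / 2) * (a γ) ^ 2) * Real.exp (ν * R * max (|x|) (|y|)) := by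
          exact mul_le_mul_of_nonneg_left (Real.exp_le_exp.mpr hmax) (Real.exp_pos _).le
      _ ≤ Real.exp (-(ν / 2) * (a γ) ^ 2) * (Real.exp (ν * R * x) + Real.exp (-(ν * R * x)) +
            Real.exp (ν * R * y) + Real.exp (-(ν * R * y))) := by
          exact mul_le_mul_of_nonneg_left h4 (Real.exp_pos _).le
      _ = S γ := by
          simp only [hS]
          rw [mul_add, mul_add, mul_add, ← Real.exp_add, ← Real.exp_add, ← Real.exp_add,
            ← Real.exp_add]
  -- summability of the row-sum majorant
  set C : ℝ := ν ^ m * (m.factorial : ℝ) * Real.exp t with hC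
  have hG : Summable (fun γ : ℤ × ℤ =>
      Real.exp (-(ν / 2) * (a γ) ^ 2) * (ν ^ m * (a γ + t) ^ m * Real.exp (ν * t * a γ))) := by
    refine Summable.of_nonneg_of_le (fun γ => ?_) (fun γ => ?_) (hSsum.mul_left C)
    · have := ha0 γ
      positivity
    · have g1 : (a γ + t) ^ m ≤ (m.factorial : ℝ) * Real.exp (a γ + t) :=
        hpow _ (by have := ha0 γ; linarith)
      have base : 0 ≤ Real.exp (-(ν / 2) * (a γ) ^ 2) * ν ^ m * Real.exp (ν * t * a γ) := by
        positivity
      have g2 := mul_le_mul_of_nonneg_left g1 base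
      have g3 : Real.exp (-(ν / 2) * (a γ) ^ 2) * ν ^ m * Real.exp (ν * t * a γ) *
          ((m.factorial : ℝ) * Real.exp (a γ + t))
          = C * (Real.exp (-(ν / 2) * (a γ) ^ 2) * Real.exp (c0 * a γ)) := by
        rw [hC, Real.exp_add, show c0 * a γ = ν * t * a γ + a γ by rw [hc0]; ring,
          Real.exp_add]
        ring
      calc Real.exp (-(ν / 2) * (a γ) ^ 2) * (ν ^ m * (a γ + t) ^ m * Real.exp (ν * t * a γ))
          = Real.exp (-(ν / 2) * (a γ) ^ 2) * ν ^ m * Real.exp (ν * t * a γ) * (a γ + t) ^ m := by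
            ring
        _ ≤ Real.exp (-(ν / 2) * (a γ) ^ 2) * ν ^ m * Real.exp (ν * t * a γ) *
            ((m.factorial : ℝ) * Real.exp (a γ + t)) := g2
        _ = C * (Real.exp (-(ν / 2) * (a γ) ^ 2) * Real.exp (c0 * a γ)) := g3
        _ ≤ C * S γ := by
            apply mul_le_mul_of_nonneg_left (hdir γ)
            rw [hC]; positivity
  -- summability of B on the product
  have hBsum : Summable B := by
    refine (summable_prod_of_nonneg hBnonneg).mpr ⟨fun γ => (hBrow γ).summable, ?_⟩
    refine hG.congr fun γ => ?_
    exact ((hBrow γ).tsum_eq).symm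
  have hFsum : Summable F :=
    Summable.of_norm (Summable.of_nonneg_of_le (fun p => norm_nonneg _) hFnorm hBsum)
  -- row sums of F
  have hrowF : ∀ γ : ℤ × ℤ, HasSum (fun n => F (γ, n))
      ((-1 : ℂ) ^ m * (ν : ℂ) ^ m *
        (χ (Λ γ) * (z - Λ γ) ^ m *
          Complex.exp (-(ν : ℂ) / 2 * (‖Λ γ‖ : ℂ) ^ 2 +
            (ν : ℂ) * z * starRingEnd ℂ (Λ γ)))) := by
    intro γ
    have h := (hermiteC_hasSum ν hν' (Λ γ) z m).mul_left
      (χ (Λ γ) * Complex.exp (-(ν : ℂ) / 2 * (‖Λ γ‖ : ℂ) ^ 2))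
    have hval : χ (Λ γ) * Complex.exp (-(ν : ℂ) / 2 * (‖Λ γ‖ : ℂ) ^ 2) *
        ((ν : ℂ) ^ m * (Λ γ - z) ^ m * Complex.exp ((ν : ℂ) * z * starRingEnd ℂ (Λ γ)))
        = (-1 : ℂ) ^ m * (ν : ℂ) ^ m *
          (χ (Λ γ) * (z - Λ γ) ^ m *
            Complex.exp (-(ν : ℂ) / 2 * (‖Λ γ‖ : ℂ) ^ 2 +
              (ν : ℂ) * z * starRingEnd ℂ (Λ γ))) := by
      rw [Complex.exp_add, show Λ γ - z = -(z - Λ γ) by ring, neg_pow]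
      ring
    rw [hval] at h
    exact h
  -- column sums of F
  have hcolF : ∀ n : ℕ, HasSum (fun γ : ℤ × ℤ => F (γ, n))
      (aCoeff ν ω₁ ω₂ χ m n * z ^ n / (n.factorial : ℂ)) := by
    intro n
    have h := (hasum m n).hasSum.mul_right (z ^ n / (n.factorial : ℂ))
    have hval : (∑' γ : ℤ × ℤ,
        χ (latPt ω₁ ω₂ γ) * Complex.exp (-(ν : ℂ) / 2 *
          (‖latPt ω₁ ω₂ γ‖ : ℂ) ^ 2) * hermiteC ν m n (latPt ω₁ ω₂ γ)) *
          (z ^ n / (n.factorial : ℂ))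
        = aCoeff ν ω₁ ω₂ χ m n * z ^ n / (n.factorial : ℂ) := by
      rw [aCoeff, mul_div_assoc]
    rw [hval] at h
    refine h.congr_fun fun γ => ?_
    simp only [hF, hΛ]
    ring
  constructor
  · exact (hFsum.prod_symm.prod).congr fun n => (hcolF n).tsum_eq
  · have h1 : ∑' p : (ℤ × ℤ) × ℕ, F p = ∑' γ : ℤ × ℤ, ∑' n : ℕ, F (γ, n) :=
      Summable.tsum_prod hFsum
    have h2 : ∑' p : ℕ × (ℤ × ℤ), F (p.2, p.1) = ∑' n : ℕ, ∑' γ : ℤ × ℤ, F (γ, n) :=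
      Summable.tsum_prod hFsum.prod_symm
    have h3 : ∑' p : ℕ × (ℤ × ℤ), F (p.2, p.1) = ∑' p : (ℤ × ℤ) × ℕ, F p := by
      exact ((Equiv.prodComm ℕ (ℤ × ℤ)).tsum_eq F)
    have h4 : ∑' γ : ℤ × ℤ, ∑' n : ℕ, F (γ, n)
        = (-1 : ℂ) ^ m * (ν : ℂ) ^ m * poincareMonomial ν ω₁ ω₂ χ m z := by
      rw [poincareMonomial, ← tsum_mul_left]
      exact tsum_congr fun γ => (hrowF γ).tsum_eq
    have h5 : ∑' n : ℕ, ∑' γ : ℤ × ℤ, F (γ, n)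
        = ∑' n : ℕ, aCoeff ν ω₁ ω₂ χ m n * z ^ n / (n.factorial : ℂ) :=
      tsum_congr fun n => (hcolF n).tsum_eq
    have hkey : (-1 : ℂ) ^ m * (ν : ℂ) ^ m * poincareMonomial ν ω₁ ω₂ χ m z
        = ∑' n : ℕ, aCoeff ν ω₁ ω₂ χ m n * z ^ n / (n.factorial : ℂ) := by
      rw [← h4, ← h1, ← h3, h2, h5]
    have hne1 : ((-1 : ℂ)) ^ m ≠ 0 := pow_ne_zero _ (by norm_num)
    have hne2 : ((ν : ℂ)) ^ m ≠ 0 := pow_ne_zero _ (by exact_mod_cast hν')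
    have hsq : ((-1 : ℂ)) ^ m * ((-1 : ℂ)) ^ m = 1 := by
      rw [← pow_add, ← two_mul, pow_mul]; norm_num
    rw [← hkey]
    have hre : ((-1 : ℂ) ^ m / (ν : ℂ) ^ m) *
        ((-1 : ℂ) ^ m * (ν : ℂ) ^ m * poincareMonomial ν ω₁ ω₂ χ m z)
        = ((-1 : ℂ) ^ m * (-1 : ℂ) ^ m) * ((ν : ℂ) ^ m / (ν : ℂ) ^ m) *
          poincareMonomial ν ω₁ ω₂ χ m z := by ring
    rw [hre, hsq, div_self hne2, one_mul, one_mul]
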